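/- Let λ₁,…,λₙ be a graded basis of an n-dimensional space M of linear functionals on Π(ℝ^d), with orders κᵢ := max{k : λᵢ vanishes on Π_{<k}}, and define wⱼ(x) := λⱼ(‖x−·‖^(2κⱼ)). Then deg wⱼ = κⱼ for each j. -/

import Mathlib

open MvPolynomial Finset

noncomputable section

/-- The multi-index on the first (`x`) block of variables of a monomial in `Fin d ⊕ Fin d`. -/
def xpart {d : ℕ} (m : (Fin d ⊕ Fin d) →₀ ℕ) : Fin d →₀ ℕ :=
  Finsupp.equivFunOnFinite.symm fun i => m (Sum.inl i)

/-- The multi-index on the second (`y`) block of variables. -/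
def ypart {d : ℕ} (m : (Fin d ⊕ Fin d) →₀ ℕ) : Fin d →₀ ℕ :=
  Finsupp.equivFunOnFinite.symm fun i => m (Sum.inr i)

/-- `(l ⊗ m) f`: apply `l` in the `x`-variables and `m` in the `y`-variables of a
two-block polynomial `f`, via its canonical representation as a sum of products
of monomials in `x` and monomials in `y`. -/
def tensorApply {d : ℕ} (l m : Module.Dual ℝ (MvPolynomial (Fin d) ℝ))
    (f : MvPolynomial (Fin d ⊕ Fin d) ℝ) : ℝ :=
  ∑ mo ∈ f.support, f.coeff mo * l (monomial (xpart mo) 1) * m (monomial (ypart mo) 1)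

/-- Apply the linear functional `l` in the second (`y`) block of variables,
yielding a polynomial in the first (`x`) block of variables. -/
def applySecond {d : ℕ} (l : Module.Dual ℝ (MvPolynomial (Fin d) ℝ))
    (f : MvPolynomial (Fin d ⊕ Fin d) ℝ) : MvPolynomial (Fin d) ℝ :=
  ∑ mo ∈ f.support, monomial (xpart mo) (f.coeff mo * l (monomial (ypart mo) 1))

/-- The polynomial `(x,y) ↦ ‖x-y‖^(2k)` in the `2d` variables `x(1),…,x(d),y(1),…,y(d)`. -/
def distPoly (d k : ℕ) : MvPolynomial (Fin d ⊕ Fin d) ℝ :=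
  (∑ i : Fin d, (X (Sum.inl i) - X (Sum.inr i)) ^ 2) ^ k

/-- `l` vanishes on all polynomials of total degree `< k` (i.e. `l ⊥ Π_{<k}`). -/
def VanishesLT {d : ℕ} (l : Module.Dual ℝ (MvPolynomial (Fin d) ℝ)) (k : ℕ) : Prop :=
  ∀ p : MvPolynomial (Fin d) ℝ, p.totalDegree < k → l p = 0

/-- `l` vanishes on all polynomials of total degree `≤ k` (i.e. `l ⊥ Π_{≤k}`). -/
def VanishesLE {d : ℕ} (l : Module.Dual ℝ (MvPolynomial (Fin d) ℝ)) (k : ℕ) : Prop :=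
  ∀ p : MvPolynomial (Fin d) ℝ, p.totalDegree ≤ k → l p = 0

/-- `p_{a,β} : x ↦ ‖x‖^(2a) x^β` as a polynomial. -/
def pPoly (d : ℕ) (a : ℕ) (β : Fin d →₀ ℕ) : MvPolynomial (Fin d) ℝ :=
  (∑ i : Fin d, X i ^ 2) ^ a * monomial β 1

/-- `⊥Π_{<k}`: the subspace of linear functionals vanishing on all polynomials
of total degree `< k`. -/
def perpLT (d k : ℕ) : Submodule ℝ (Module.Dual ℝ (MvPolynomial (Fin d) ℝ)) where
  carrier := {l | VanishesLT l k}
  zero_mem' := fun _ _ => rfl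
  add_mem' := fun {a b} ha hb p hp => by
    simp [LinearMap.add_apply, ha p hp, hb p hp]
  smul_mem' := fun c l hl p hp => by
    simp [LinearMap.smul_apply, hl p hp]

/-- `Π_{<k}`: the subspace of polynomials of total degree `< k`. -/
def degLT (d k : ℕ) : Submodule ℝ (MvPolynomial (Fin d) ℝ) where
  carrier := {p | ∀ m ∈ p.support, (m.sum fun _ e => e) < k}
  zero_mem' := by simp
  add_mem' := fun {a b} ha hb m hm => by
    rcases Finset.mem_union.mp (MvPolynomial.support_add hm) with h | h
    · exact ha m h
    · exact hb m h
  smul_mem' := fun c p hp m hm => hp m (MvPolynomial.support_smul hm)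

-- AUX START

section Aux
variable {d : ℕ}

lemma xpart_apply (mo : (Fin d ⊕ Fin d) →₀ ℕ) (i : Fin d) : xpart mo i = mo (Sum.inl i) := by
  simp [xpart]

lemma ypart_apply (mo : (Fin d ⊕ Fin d) →₀ ℕ) (i : Fin d) : ypart mo i = mo (Sum.inr i) := by
  simp [ypart]

variable (l m : Module.Dual ℝ (MvPolynomial (Fin d) ℝ))

lemma tensorApply_eq_sum_of_subset (f : MvPolynomial (Fin d ⊕ Fin d) ℝ)
    {s : Finset ((Fin d ⊕ Fin d) →₀ ℕ)} (hs : f.support ⊆ s) :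
    tensorApply l m f
      = ∑ mo ∈ s, f.coeff mo * l (monomial (xpart mo) 1) * m (monomial (ypart mo) 1) :=
  Finset.sum_subset hs (fun mo _ hmo => by
    rw [MvPolynomial.notMem_support_iff.mp hmo, zero_mul, zero_mul])

def tensorApplyL : MvPolynomial (Fin d ⊕ Fin d) ℝ →ₗ[ℝ] ℝ where
  toFun := tensorApply l m
  map_add' f g := by
    classical
    rw [tensorApply_eq_sum_of_subset l m (f + g) (MvPolynomial.support_add),
      tensorApply_eq_sum_of_subset l m f Finset.subset_union_left,
      tensorApply_eq_sum_of_subset l m g Finset.subset_union_right,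
      ← Finset.sum_add_distrib]
    exact Finset.sum_congr rfl fun mo _ => by rw [MvPolynomial.coeff_add]; ring
  map_smul' c f := by
    show tensorApply l m (c • f) = c • tensorApply l m f
    rw [smul_eq_mul,
      tensorApply_eq_sum_of_subset l m (c • f) MvPolynomial.support_smul,
      tensorApply, Finset.mul_sum]
    exact Finset.sum_congr rfl fun mo _ => by
      rw [MvPolynomial.coeff_smul, smul_eq_mul]; ring

@[simp] lemma tensorApplyL_apply (f : MvPolynomial (Fin d ⊕ Fin d) ℝ) :
    tensorApplyL l m f = tensorApply l m f := rfl

lemma tensorApply_monomial (mo : (Fin d ⊕ Fin d) →₀ ℕ) (c : ℝ) :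
    tensorApply l m (monomial mo c)
      = c * l (monomial (xpart mo) 1) * m (monomial (ypart mo) 1) := by
  classical
  rcases eq_or_ne c 0 with rfl | hc
  · simp [tensorApply]
  · rw [tensorApply, MvPolynomial.support_monomial, if_neg hc, Finset.sum_singleton,
      MvPolynomial.coeff_monomial, if_pos rfl]

lemma xpart_inl_inr (α β : Fin d →₀ ℕ) :
    xpart (Finsupp.mapDomain Sum.inl α + Finsupp.mapDomain Sum.inr β) = α := by
  ext i
  rw [xpart_apply, Finsupp.add_apply, Finsupp.mapDomain_apply Sum.inl_injective,
    Finsupp.mapDomain_notin_range _ _ (by simp), add_zero]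

lemma ypart_inl_inr (α β : Fin d →₀ ℕ) :
    ypart (Finsupp.mapDomain Sum.inl α + Finsupp.mapDomain Sum.inr β) = β := by
  ext i
  rw [ypart_apply, Finsupp.add_apply, Finsupp.mapDomain_apply Sum.inr_injective,
    Finsupp.mapDomain_notin_range _ _ (by simp), zero_add]

lemma apply_monomial_eq (φ : Module.Dual ℝ (MvPolynomial (Fin d) ℝ)) (γ : Fin d →₀ ℕ) (r : ℝ) :
    φ (monomial γ r) = r * φ (monomial γ 1) := by
  rw [show (monomial γ r : MvPolynomial (Fin d) ℝ) = r • monomial γ 1 by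
    rw [MvPolynomial.smul_monomial, smul_eq_mul, mul_one], map_smul, smul_eq_mul]

lemma tensorApply_rename_mul (F G : MvPolynomial (Fin d) ℝ) :
    tensorApply l m (rename Sum.inl F * rename Sum.inr G) = l F * m G := by
  induction F using MvPolynomial.induction_on' with
  | add p q hp hq =>
    rw [map_add, add_mul, ← tensorApplyL_apply, map_add, tensorApplyL_apply, tensorApplyL_apply,
      hp, hq, map_add, add_mul]
  | monomial α c =>
    induction G using MvPolynomial.induction_on' with
    | add p q hp hq =>
      rw [map_add, mul_add, ← tensorApplyL_apply, map_add, tensorApplyL_apply, tensorApplyL_apply,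
        hp, hq, map_add, mul_add]
    | monomial β e =>
      rw [rename_monomial, rename_monomial, MvPolynomial.monomial_mul, tensorApply_monomial,
        xpart_inl_inr, ypart_inl_inr, apply_monomial_eq l α c, apply_monomial_eq m β e]
      ring

lemma apply_applySecond (f : MvPolynomial (Fin d ⊕ Fin d) ℝ) :
    l (applySecond m f) = tensorApply l m f := by
  rw [applySecond, map_sum, tensorApply]
  refine Finset.sum_congr rfl fun mo _ => ?_
  rw [apply_monomial_eq l (xpart mo) _]
  ring

end Aux
section Aux2
variable {d : ℕ}

lemma distPoly_isHomogeneous (d k : ℕ) : (distPoly d k).IsHomogeneous (2 * k) := by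
  have h2 : (∑ i : Fin d, ((X (Sum.inl i) - X (Sum.inr i)) ^ 2 :
      MvPolynomial (Fin d ⊕ Fin d) ℝ)).IsHomogeneous 2 := by
    refine MvPolynomial.IsHomogeneous.sum _ _ _ fun i _ => ?_
    simpa using ((MvPolynomial.isHomogeneous_X _ _).sub (MvPolynomial.isHomogeneous_X _ _)).pow 2
  simpa [distPoly] using h2.pow k

lemma parts_sum (mo : (Fin d ⊕ Fin d) →₀ ℕ) :
    ((xpart mo).sum fun _ e => e) + ((ypart mo).sum fun _ e => e) = mo.sum fun _ e => e := by
  rw [Finsupp.sum_fintype _ _ (fun _ => rfl), Finsupp.sum_fintype _ _ (fun _ => rfl),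
    Finsupp.sum_fintype _ _ (fun _ => rfl), Fintype.sum_sum_type]
  simp [xpart_apply, ypart_apply]

lemma distPoly_expand (d k : ℕ) :
    distPoly d k =
      ∑ b ∈ range (k + 1), ∑ a ∈ range (b + 1),
        ∑ γ ∈ piAntidiag (univ : Finset (Fin d)) (k - b),
          ((k.choose b : ℝ) * (b.choose a : ℝ) * (Nat.multinomial univ γ : ℝ) * (-2) ^ (k - b)) •
            (rename Sum.inl ((∑ i : Fin d, X i ^ 2) ^ a * ∏ i : Fin d, X i ^ γ i) *
             rename Sum.inr ((∑ i : Fin d, X i ^ 2) ^ (b - a) * ∏ i : Fin d, X i ^ γ i)) := by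
  have hsplit : (∑ i : Fin d, ((X (Sum.inl i) - X (Sum.inr i)) ^ 2 :
        MvPolynomial (Fin d ⊕ Fin d) ℝ))
      = ((∑ i : Fin d, (X (Sum.inl i) : MvPolynomial (Fin d ⊕ Fin d) ℝ) ^ 2)
          + ∑ i : Fin d, (X (Sum.inr i) : MvPolynomial (Fin d ⊕ Fin d) ℝ) ^ 2)
        + (-2) * ∑ i : Fin d, (X (Sum.inl i) : MvPolynomial (Fin d ⊕ Fin d) ℝ) * X (Sum.inr i) := by
    rw [Finset.mul_sum, ← Finset.sum_add_distrib, ← Finset.sum_add_distrib]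
    exact Finset.sum_congr rfl fun i _ => by ring
  rw [distPoly, hsplit, add_pow]
  refine Finset.sum_congr rfl fun b hb => ?_
  rw [add_pow, mul_pow, Finset.sum_pow_eq_sum_piAntidiag]
  simp only [Finset.sum_mul, Finset.mul_sum]
  rw [Finset.sum_comm]
  refine Finset.sum_congr rfl fun a ha => Finset.sum_congr rfl fun γ hγ => ?_
  rw [MvPolynomial.smul_eq_C_mul]
  simp only [map_mul, map_pow, map_prod, map_sum, rename_X, map_natCast, map_neg, map_ofNat,
    mul_pow, Finset.prod_mul_distrib]
  ring

end Aux2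
section Aux3
variable {d : ℕ} (l m : Module.Dual ℝ (MvPolynomial (Fin d) ℝ))

lemma tensorApply_distPoly (k : ℕ) :
    tensorApply l m (distPoly d k) =
      ∑ b ∈ range (k + 1), ∑ a ∈ range (b + 1),
        ∑ γ ∈ piAntidiag (univ : Finset (Fin d)) (k - b),
          ((k.choose b : ℝ) * (b.choose a : ℝ) * (Nat.multinomial univ γ : ℝ) * (-2) ^ (k - b)) *
            (l ((∑ i : Fin d, X i ^ 2) ^ a * ∏ i : Fin d, X i ^ γ i) *
             m ((∑ i : Fin d, X i ^ 2) ^ (b - a) * ∏ i : Fin d, X i ^ γ i)) := by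
  have h0 : tensorApply l m (distPoly d k) = tensorApplyL l m (distPoly d k) := rfl
  rw [h0, distPoly_expand, map_sum]
  refine Finset.sum_congr rfl fun b _ => ?_
  rw [map_sum]
  refine Finset.sum_congr rfl fun a _ => ?_
  rw [map_sum]
  refine Finset.sum_congr rfl fun γ _ => ?_
  rw [map_smul, smul_eq_mul, tensorApplyL_apply, tensorApply_rename_mul]

lemma totalDegree_term_le (a j : ℕ) (γ : Fin d → ℕ) (hγ : ∑ i, γ i = j) :
    ((∑ i : Fin d, X i ^ 2 : MvPolynomial (Fin d) ℝ) ^ a * ∏ i : Fin d, X i ^ γ i).totalDegree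
      ≤ 2 * a + j := by
  refine (MvPolynomial.totalDegree_mul _ _).trans (add_le_add ?_ ?_)
  · refine (MvPolynomial.totalDegree_pow _ _).trans ?_
    have hS : (∑ i : Fin d, (X i : MvPolynomial (Fin d) ℝ) ^ 2).totalDegree ≤ 2 :=
      (MvPolynomial.totalDegree_finset_sum _ _).trans (Finset.sup_le fun i _ =>
        (MvPolynomial.totalDegree_pow _ _).trans (by simp [MvPolynomial.totalDegree_X]))
    calc a * (∑ i : Fin d, (X i : MvPolynomial (Fin d) ℝ) ^ 2).totalDegree ≤ a * 2 :=
          Nat.mul_le_mul_left a hS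
      _ = 2 * a := Nat.mul_comm a 2
  · refine (MvPolynomial.totalDegree_finset_prod _ _).trans ?_
    rw [← hγ]
    exact Finset.sum_le_sum fun i _ => (MvPolynomial.totalDegree_pow _ _).trans
      (by simp [MvPolynomial.totalDegree_X])

lemma totalDegree_applySecond_le {k : ℕ} (hl : VanishesLT l k) :
    (applySecond l (distPoly d k)).totalDegree ≤ k := by
  refine (MvPolynomial.totalDegree_finset_sum _ _).trans (Finset.sup_le fun mo hmo => ?_)
  by_cases hx : ((xpart mo).sum fun _ e => e) ≤ k
  · exact (MvPolynomial.totalDegree_monomial_le _ _).trans hx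
  · have hdeg : (mo.sum fun _ e => e) = 2 * k := by
      have h1 := distPoly_isHomogeneous d k (MvPolynomial.mem_support_iff.mp hmo)
      have h2 : mo.degree = 2 * k := by rw [Finsupp.degree_eq_weight_one]; exact h1
      exact h2
    have hy : ((ypart mo).sum fun _ e => e) < k := by
      have := parts_sum mo; omega
    have h0 : l (monomial (ypart mo) 1) = 0 :=
      hl _ (by rw [MvPolynomial.totalDegree_monomial _ one_ne_zero]; exact hy)
    simp [h0]

end Aux3
section Main
variable {d : ℕ}

theorem schaback_main (l : Module.Dual ℝ (MvPolynomial (Fin d) ℝ)) (k : ℕ)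
    (hv : VanishesLT l k) (hnv : ¬ VanishesLT l (k + 1)) :
    (applySecond l (distPoly d k)).totalDegree = k := by
  -- witness monomial of degree exactly k not annihilated by l
  have hex : ∃ μ : Fin d →₀ ℕ, (μ.sum fun _ e => e) = k ∧ l (monomial μ 1) ≠ 0 := by
    unfold VanishesLT at hnv
    push_neg at hnv
    obtain ⟨p, hdeg, hp⟩ := hnv
    by_contra hall
    push_neg at hall
    apply hp
    conv_lhs => rw [p.as_sum]
    rw [map_sum]
    refine Finset.sum_eq_zero fun μ hμ => ?_
    have hle : (μ.sum fun _ e => e) ≤ k := by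
      have := MvPolynomial.le_totalDegree hμ; omega
    rw [apply_monomial_eq]
    rcases lt_or_eq_of_le hle with hlt | heq
    · rw [hv _ (by rw [MvPolynomial.totalDegree_monomial _ one_ne_zero]; exact hlt), mul_zero]
    · rw [hall μ heq, mul_zero]
  obtain ⟨μ, hμk, hμne⟩ := hex
  -- every term of the expansion is nonneg after multiplying by (-1)^k
  have hterm : ∀ b ∈ range (k + 1), ∀ a ∈ range (b + 1),
      ∀ γ ∈ piAntidiag (univ : Finset (Fin d)) (k - b),
      0 ≤ (-1 : ℝ) ^ k *
        (((k.choose b : ℝ) * (b.choose a : ℝ) * (Nat.multinomial univ γ : ℝ) * (-2) ^ (k - b)) *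
          (l ((∑ i : Fin d, X i ^ 2) ^ a * ∏ i : Fin d, X i ^ γ i) *
           l ((∑ i : Fin d, X i ^ 2) ^ (b - a) * ∏ i : Fin d, X i ^ γ i))) := by
    intro b hb a ha γ hγ
    rw [Finset.mem_range] at hb ha
    rw [Finset.mem_piAntidiag] at hγ
    rcases lt_trichotomy b (2 * a) with hba | hba | hba
    · have h0 : l ((∑ i : Fin d, X i ^ 2) ^ (b - a) * ∏ i : Fin d, X i ^ γ i) = 0 := by
        refine hv _ (lt_of_le_of_lt (totalDegree_term_le (b - a) (k - b) γ hγ.1) ?_)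
        omega
      rw [h0, mul_zero, mul_zero, mul_zero]
    · have hba' : b - a = a := by omega
      rw [hba']
      set q := l ((∑ i : Fin d, X i ^ 2) ^ a * ∏ i : Fin d, X i ^ γ i) with hq
      have hsign : (-1 : ℝ) ^ k * (-2) ^ (k - b) = 2 ^ (k - b) := by
        rw [show ((-2 : ℝ)) = (-1) * 2 by norm_num, mul_pow, ← mul_assoc, ← pow_add,
          show k + (k - b) = 2 * (k - a) by omega, pow_mul]
        norm_num
      have heq : (-1 : ℝ) ^ k *
          (((k.choose b : ℝ) * (b.choose a : ℝ) * (Nat.multinomial univ γ : ℝ) * (-2) ^ (k - b)) *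
            (q * q))
          = ((k.choose b : ℝ) * (b.choose a : ℝ) * (Nat.multinomial univ γ : ℝ)) *
            (2 ^ (k - b) * (q * q)) := by
        rw [← hsign]; ring
      rw [heq]
      exact mul_nonneg (by positivity) (mul_nonneg (by positivity) (mul_self_nonneg q))
    · have h0 : l ((∑ i : Fin d, X i ^ 2) ^ a * ∏ i : Fin d, X i ^ γ i) = 0 := by
        refine hv _ (lt_of_le_of_lt (totalDegree_term_le a (k - b) γ hγ.1) ?_)
        omega
      rw [h0, zero_mul, mul_zero, mul_zero]
  -- positivity of (-1)^k * tensorApply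
  have hpos : 0 < (-1 : ℝ) ^ k * tensorApply l l (distPoly d k) := by
    rw [tensorApply_distPoly]
    simp only [Finset.mul_sum]
    refine Finset.sum_pos'
      (fun b hb => Finset.sum_nonneg fun a ha => Finset.sum_nonneg fun γ hγ =>
        hterm b hb a ha γ hγ)
      ⟨0, Finset.mem_range.mpr (Nat.succ_pos k), ?_⟩
    rw [Finset.sum_range_one]
    have hμmem : (⇑μ : Fin d → ℕ) ∈ piAntidiag (univ : Finset (Fin d)) (k - 0) := by
      rw [Finset.mem_piAntidiag]
      refine ⟨?_, fun i _ => Finset.mem_univ i⟩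
      rw [Nat.sub_zero, ← hμk, Finsupp.sum_fintype _ _ (fun _ => rfl)]
    refine Finset.sum_pos'
      (fun γ hγ => hterm 0 (Finset.mem_range.mpr (Nat.succ_pos k)) 0
        (Finset.mem_range.mpr Nat.one_pos) γ hγ)
      ⟨⇑μ, hμmem, ?_⟩
    have hmono : (∏ i : Fin d, (X i : MvPolynomial (Fin d) ℝ) ^ μ i) = monomial μ 1 := by
      rw [← MvPolynomial.prod_X_pow_eq_monomial]
      exact (Finset.prod_subset (Finset.subset_univ _) (fun i _ hi => by
        rw [Finsupp.notMem_support_iff.mp hi, pow_zero])).symm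
    rw [pow_zero, one_mul]
    simp only [Nat.sub_zero]
    rw [hmono]
    set r := l (monomial μ 1) with hr
    have h2 : (-1 : ℝ) ^ k * (-2) ^ k = 2 ^ k := by
      rw [← mul_pow]; norm_num
    have hmp : (0 : ℝ) < (Nat.multinomial (univ : Finset (Fin d)) ⇑μ : ℝ) :=
      Nat.cast_pos.mpr (Nat.multinomial_pos _ _)
    calc (0 : ℝ) < (Nat.multinomial (univ : Finset (Fin d)) ⇑μ : ℝ) * (2 ^ k * (r * r)) :=
          mul_pos hmp (mul_pos (by positivity) (mul_self_pos.mpr hμne))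
      _ = (-1 : ℝ) ^ k *
          ((k.choose 0 : ℝ) * ((0 : ℕ).choose 0 : ℝ) *
            (Nat.multinomial (univ : Finset (Fin d)) ⇑μ : ℝ) * (-2) ^ k * (r * r)) := by
          rw [← h2]; simp [Nat.choose_zero_right]; ring
  have hne0 : tensorApply l l (distPoly d k) ≠ 0 := by
    intro h; rw [h, mul_zero] at hpos; exact lt_irrefl 0 hpos
  have hub : (applySecond l (distPoly d k)).totalDegree ≤ k := totalDegree_applySecond_le l hv
  by_contra hne
  have hlt : (applySecond l (distPoly d k)).totalDegree < k := lt_of_le_of_ne hub hne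
  exact hne0 (by rw [← apply_applySecond l l]; exact hv _ hlt)

end Main

/-- For a graded basis `λ₁,…,λₙ` with orders `κᵢ`, the Schaback polynomials
`wⱼ(x) := λⱼ‖x−·‖^(2κⱼ)` satisfy `deg wⱼ = κⱼ`. -/
theorem schaback_w_degree (d n : ℕ)
    (M : Submodule ℝ (Module.Dual ℝ (MvPolynomial (Fin d) ℝ)))
    (hM : Module.finrank ℝ M = n)
    (lam : Fin n → Module.Dual ℝ (MvPolynomial (Fin d) ℝ))
    (hmem : ∀ i, lam i ∈ M)
    (κ : Fin n → ℕ)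
    -- `κ i` is the order of `lam i`: the largest `k` with `lam i ⊥ Π_{<k}`
    (horder : ∀ i, VanishesLT (lam i) (κ i) ∧ ¬ VanishesLT (lam i) (κ i + 1))
    -- the basis is graded: `i ↦ κ i` is nondecreasing and, for each `k`,
    -- `(lam i : κ i ≥ k)` is a basis of `M ∩ ⊥Π_{<k}`
    (hmono : Monotone κ)
    (hbasis : ∀ k : ℕ,
      LinearIndependent ℝ (fun i : {i : Fin n // k ≤ κ i} => lam i.1) ∧
      Submodule.span ℝ (Set.range fun i : {i : Fin n // k ≤ κ i} => lam i.1) =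
        M ⊓ perpLT d k)
    : ∀ j, (applySecond (lam j) (distPoly d (κ j))).totalDegree = κ j := by
  intro j
  exact schaback_main (lam j) (κ j) (horder j).1 (horder j).2
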